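/- arXiv:2309.14524 — 2 statements merged into one kernel-verified Lean document; each statement's English description precedes it below -/
import Mathlib

section
/- Let φ be a graph automorphism of M and let x be a vertex such that φ x = x and φ y = y for every vertex y adjacent to x (i.e. φ fixes a tripod pointwise). Then φ is the identity automorphism. -/
/-- The Möbius–Kantor graph, realized as the graph on `ZMod 16` in which
distinct `x, y` are adjacent iff there are `a ∈ {0, 1, 3}` and `v : ZMod 16`
with `v.val` even such that `{x, y} = {v, v + (2a - 1)}`. -/
def MKGraph : SimpleGraph (ZMod 16) where
  Adj x y := x ≠ y ∧ ∃ a ∈ ({0, 1, 3} : Set ℕ), ∃ v : ZMod 16, Even v.val ∧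
    s(x, y) = s(v, v + (2 * (a : ZMod 16) - 1))
  symm := by
    constructor
    rintro x y ⟨hxy, a, ha, v, hv, h⟩
    exact ⟨hxy.symm, a, ha, v, hv, Sym2.eq_swap.trans h⟩
  loopless := by
    constructor
    rintro x ⟨hxx, -⟩
    exact hxx rfl

lemma adj_iff (x y : ZMod 16) : MKGraph.Adj x y ↔ (x ≠ y ∧ ∃ v : ZMod 16, Even v.val ∧
    (s(x, y) = s(v, v + 15) ∨ s(x, y) = s(v, v + 1) ∨ s(x, y) = s(v, v + 5))) := by
  constructor
  · rintro ⟨hne, a, ha, v, hv, h⟩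
    refine ⟨hne, v, hv, ?_⟩
    simp only [Set.mem_insert_iff, Set.mem_singleton_iff] at ha
    rcases ha with rfl | rfl | rfl
    · left; rw [h]; congr 1
    · right; left; rw [h]; congr 1
    · right; right; rw [h]; congr 1
  · rintro ⟨hne, v, hv, h⟩
    rcases h with h | h | h
    · exact ⟨hne, 0, by simp, v, hv, by rw [h]; congr 1⟩
    · exact ⟨hne, 1, by simp, v, hv, by rw [h]; congr 1⟩
    · exact ⟨hne, 3, by simp, v, hv, by rw [h]; congr 1⟩

instance : DecidableRel MKGraph.Adj := fun x y => decidable_of_iff' _ (adj_iff x y)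

/-- An automorphism fixing `0`, and all neighbours of `0`, is the identity. -/
lemma key0 (φ : MKGraph ≃g MKGraph) (h0 : φ 0 = 0)
    (hn : ∀ y, MKGraph.Adj 0 y → φ y = y) : ∀ z, φ z = z := by
  have h1 : φ 1 = 1 := hn 1 (by decide)
  have h5 : φ 5 = 5 := hn 5 (by decide)
  have h15 : φ 15 = 15 := hn 15 (by decide)
  have inj : Function.Injective φ := fun a b h => φ.toEquiv.injective h
  have adj_im : ∀ {p q p' q' : ZMod 16}, φ p = p' → φ q = q' →
      MKGraph.Adj p q → MKGraph.Adj p' q' := by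
    intro p q p' q' hp hq h
    have := φ.map_rel_iff.mpr h
    rwa [hp, hq] at this
  have ne_im : ∀ {p q r : ZMod 16}, φ p = r → q ≠ p → φ q ≠ r := by
    intro p q r hp hqp h
    exact hqp (inj (h.trans hp.symm))
  have N5 : ∀ w, MKGraph.Adj 5 w → (w = 0 ∨ w = 4 ∨ w = 6) := by decide
  have c4 : φ 4 = 4 ∨ φ 4 = 6 := by
    rcases N5 _ (adj_im h5 rfl (by decide : MKGraph.Adj 5 4)) with h | h | h
    · exact absurd h (ne_im h0 (by decide))
    · exact Or.inl h
    · exact Or.inr h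
  have c6 : φ 6 = 4 ∨ φ 6 = 6 := by
    rcases N5 _ (adj_im h5 rfl (by decide : MKGraph.Adj 5 6)) with h | h | h
    · exact absurd h (ne_im h0 (by decide))
    · exact Or.inl h
    · exact Or.inr h
  have N1 : ∀ w, MKGraph.Adj 1 w → (w = 0 ∨ w = 2 ∨ w = 12) := by decide
  have c2 : φ 2 = 2 ∨ φ 2 = 12 := by
    rcases N1 _ (adj_im h1 rfl (by decide : MKGraph.Adj 1 2)) with h | h | h
    · exact absurd h (ne_im h0 (by decide))
    · exact Or.inl h
    · exact Or.inr h
  -- rule out `φ 2 = 12`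
  have h2 : φ 2 = 2 := by
    rcases c2 with h2 | h2
    · exact h2
    exfalso
    have N12 : ∀ w, MKGraph.Adj 12 w → (w = 1 ∨ w = 11 ∨ w = 13) := by decide
    have c3 : φ 3 = 11 ∨ φ 3 = 13 := by
      rcases N12 _ ((adj_im rfl h2 (by decide : MKGraph.Adj 3 2)).symm) with h | h | h
      · exact absurd h (ne_im h1 (by decide))
      · exact Or.inl h
      · exact Or.inr h
    rcases c3 with h3 | h3
    · have h4 : φ 4 = 6 := by
        rcases c4 with h4 | h4
        · exact absurd (adj_im h3 h4 (by decide : MKGraph.Adj 3 4))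
            (by decide : ¬ MKGraph.Adj 11 4)
        · exact h4
      have c7 : φ 7 = 13 := by
        rcases N12 _ ((adj_im rfl h2 (by decide : MKGraph.Adj 7 2)).symm) with h | h | h
        · exact absurd h (ne_im h1 (by decide))
        · exact absurd h (ne_im h3 (by decide))
        · exact h
      have h6 : φ 6 = 4 := by
        rcases c6 with h | h
        · exact h
        · exact absurd h (ne_im h4 (by decide))
      exact absurd (adj_im c7 h6 (by decide : MKGraph.Adj 7 6))
        (by decide : ¬ MKGraph.Adj 13 4)
    · rcases c4 with h4 | h4
      · exact absurd (adj_im h3 h4 (by decide : MKGraph.Adj 3 4))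
          (by decide : ¬ MKGraph.Adj 13 4)
      · exact absurd (adj_im h3 h4 (by decide : MKGraph.Adj 3 4))
          (by decide : ¬ MKGraph.Adj 13 6)
  -- rule out `φ 4 = 6`
  have N2 : ∀ w, MKGraph.Adj 2 w → (w = 1 ∨ w = 3 ∨ w = 7) := by decide
  have h4 : φ 4 = 4 := by
    rcases c4 with h4 | h4
    · exact h4
    exfalso
    have h3 : φ 3 = 7 := by
      rcases N2 _ ((adj_im rfl h2 (by decide : MKGraph.Adj 3 2)).symm) with h | h | h
      · exact absurd h (ne_im h1 (by decide))
      · exact absurd (adj_im h h4 (by decide : MKGraph.Adj 3 4))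
          (by decide : ¬ MKGraph.Adj 3 6)
      · exact h
    have h7 : φ 7 = 3 := by
      rcases N2 _ ((adj_im rfl h2 (by decide : MKGraph.Adj 7 2)).symm) with h | h | h
      · exact absurd h (ne_im h1 (by decide))
      · exact h
      · exact absurd h (ne_im h3 (by decide))
    have h6 : φ 6 = 4 := by
      rcases c6 with h | h
      · exact h
      · exact absurd h (ne_im h4 (by decide))
    have N3 : ∀ w, MKGraph.Adj 3 w → (w = 2 ∨ w = 4 ∨ w = 14) := by decide
    have c8 : φ 8 = 14 := by
      rcases N3 _ ((adj_im rfl h7 (by decide : MKGraph.Adj 8 7)).symm) with h | h | h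
      · exact absurd h (ne_im h2 (by decide))
      · exact absurd h (ne_im h6 (by decide))
      · exact h
    have N6 : ∀ w, MKGraph.Adj 6 w → (w = 5 ∨ w = 7 ∨ w = 11) := by decide
    have c9 := N6 _ ((adj_im rfl h4 (by decide : MKGraph.Adj 9 4)).symm)
    have m98 : MKGraph.Adj (φ 9) 14 := adj_im rfl c8 (by decide : MKGraph.Adj 9 8)
    rcases c9 with h | h | h <;> rw [h] at m98
    · exact absurd m98 (by decide : ¬ MKGraph.Adj 5 14)
    · exact absurd m98 (by decide : ¬ MKGraph.Adj 7 14)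
    · exact absurd m98 (by decide : ¬ MKGraph.Adj 11 14)
  have h6 : φ 6 = 6 := by
    rcases c6 with h | h
    · exact absurd h (ne_im h4 (by decide))
    · exact h
  have h3 : φ 3 = 3 := by
    have m := (adj_im rfl h4 (by decide : MKGraph.Adj 3 4)).symm
    rcases N2 _ ((adj_im rfl h2 (by decide : MKGraph.Adj 3 2)).symm) with h | h | h
    · exact absurd h (ne_im h1 (by decide))
    · exact h
    · rw [h] at m; exact absurd m (by decide : ¬ MKGraph.Adj 4 7)
  have h7 : φ 7 = 7 := by
    rcases N2 _ ((adj_im rfl h2 (by decide : MKGraph.Adj 7 2)).symm) with h | h | h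
    · exact absurd h (ne_im h1 (by decide))
    · exact absurd h (ne_im h3 (by decide))
    · exact h
  have h12 : φ 12 = 12 := by
    rcases N1 _ (adj_im h1 rfl (by decide : MKGraph.Adj 1 12)) with h | h | h
    · exact absurd h (ne_im h0 (by decide))
    · exact absurd h (ne_im h2 (by decide))
    · exact h
  have N15 : ∀ w, MKGraph.Adj 15 w → (w = 0 ∨ w = 10 ∨ w = 14) := by decide
  have h14 : φ 14 = 14 := by
    have m : MKGraph.Adj (φ 14) 3 := adj_im rfl h3 (by decide : MKGraph.Adj 14 3)
    rcases N15 _ (adj_im h15 rfl (by decide : MKGraph.Adj 15 14)) with h | h | h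
    · exact absurd h (ne_im h0 (by decide))
    · rw [h] at m; exact absurd m (by decide : ¬ MKGraph.Adj 10 3)
    · exact h
  have h10 : φ 10 = 10 := by
    rcases N15 _ (adj_im h15 rfl (by decide : MKGraph.Adj 15 10)) with h | h | h
    · exact absurd h (ne_im h0 (by decide))
    · exact h
    · exact absurd h (ne_im h14 (by decide))
  have N6 : ∀ w, MKGraph.Adj 6 w → (w = 5 ∨ w = 7 ∨ w = 11) := by decide
  have h11 : φ 11 = 11 := by
    rcases N6 _ ((adj_im rfl h6 (by decide : MKGraph.Adj 11 6)).symm) with h | h | h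
    · exact absurd h (ne_im h5 (by decide))
    · exact absurd h (ne_im h7 (by decide))
    · exact h
  have N12 : ∀ w, MKGraph.Adj 12 w → (w = 1 ∨ w = 11 ∨ w = 13) := by decide
  have h13 : φ 13 = 13 := by
    rcases N12 _ ((adj_im rfl h12 (by decide : MKGraph.Adj 13 12)).symm) with h | h | h
    · exact absurd h (ne_im h1 (by decide))
    · exact absurd h (ne_im h11 (by decide))
    · exact h
  have N4 : ∀ w, MKGraph.Adj 4 w → (w = 3 ∨ w = 5 ∨ w = 9) := by decide
  have h9 : φ 9 = 9 := by
    rcases N4 _ ((adj_im rfl h4 (by decide : MKGraph.Adj 9 4)).symm) with h | h | h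
    · exact absurd h (ne_im h3 (by decide))
    · exact absurd h (ne_im h5 (by decide))
    · exact h
  have N9 : ∀ w, MKGraph.Adj 9 w → (w = 4 ∨ w = 8 ∨ w = 10) := by decide
  have h8 : φ 8 = 8 := by
    rcases N9 _ ((adj_im rfl h9 (by decide : MKGraph.Adj 8 9)).symm) with h | h | h
    · exact absurd h (ne_im h4 (by decide))
    · exact h
    · exact absurd h (ne_im h10 (by decide))
  intro z
  have hall : ∀ t : ZMod 16, t = 0 ∨ t = 1 ∨ t = 2 ∨ t = 3 ∨ t = 4 ∨ t = 5 ∨ t = 6 ∨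
      t = 7 ∨ t = 8 ∨ t = 9 ∨ t = 10 ∨ t = 11 ∨ t = 12 ∨ t = 13 ∨ t = 14 ∨ t = 15 := by
    decide
  rcases hall z with rfl|rfl|rfl|rfl|rfl|rfl|rfl|rfl|rfl|rfl|rfl|rfl|rfl|rfl|rfl|rfl <;>
    assumption

/-- Translation by `c` as a graph automorphism (given the adjacency check). -/
def shiftIso (c : ZMod 16)
    (h : ∀ a b : ZMod 16, MKGraph.Adj (a + c) (b + c) ↔ MKGraph.Adj a b) :
    MKGraph ≃g MKGraph :=
  { toEquiv := Equiv.addRight c, map_rel_iff' := fun {a b} => h a b }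

/-- Reflection `z ↦ c - z` as a graph automorphism (given the adjacency check). -/
def reflIso (c : ZMod 16)
    (h : ∀ a b : ZMod 16, MKGraph.Adj (c - a) (c - b) ↔ MKGraph.Adj a b) :
    MKGraph ≃g MKGraph :=
  { toEquiv := Equiv.subLeft c, map_rel_iff' := fun {a b} => h a b }

lemma shift2_adj : ∀ a b : ZMod 16, MKGraph.Adj (a + 2) (b + 2) ↔ MKGraph.Adj a b := by
  decide

lemma refl1_adj : ∀ a b : ZMod 16, MKGraph.Adj (1 - a) (1 - b) ↔ MKGraph.Adj a b := by
  decide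

/-- The translation-by-2 automorphism. -/
def σMK : MKGraph ≃g MKGraph := shiftIso 2 shift2_adj

/-- The reflection `z ↦ 1 - z` automorphism. -/
def ρMK : MKGraph ≃g MKGraph := reflIso 1 refl1_adj

lemma σMK_apply (t : ZMod 16) : σMK t = t + 2 := rfl

lemma ρMK_apply (t : ZMod 16) : ρMK t = 1 - t := rfl

lemma transport (φ ψ : MKGraph ≃g MKGraph) (x : ZMod 16) (hψ : ψ 0 = x)
    (hx : φ x = x) (hnb : ∀ y, MKGraph.Adj x y → φ y = y) : ∀ z, φ z = z := by
  have key : ∀ z, ψ.symm (φ (ψ z)) = z := by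
    have h0 : ψ.symm (φ (ψ 0)) = 0 := by
      rw [hψ, hx, ← hψ]; exact ψ.symm_apply_apply 0
    have hn : ∀ y, MKGraph.Adj 0 y → ψ.symm (φ (ψ y)) = y := by
      intro y hy
      have hxy : MKGraph.Adj x (ψ y) := by
        rw [← hψ]; exact ψ.map_rel_iff.mpr hy
      rw [hnb _ hxy]; exact ψ.symm_apply_apply y
    have hk := key0 (ψ.trans (φ.trans ψ.symm))
      (by simpa only [RelIso.trans_apply] using h0)
      (by simpa only [RelIso.trans_apply] using hn)
    intro z
    simpa only [RelIso.trans_apply] using hk z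
  intro z
  have hz := key (ψ.symm z)
  rw [ψ.apply_symm_apply] at hz
  calc φ z = ψ (ψ.symm (φ z)) := (ψ.apply_symm_apply _).symm
    _ = ψ (ψ.symm z) := by rw [hz]
    _ = z := ψ.apply_symm_apply _

/-- An automorphism of the Möbius–Kantor graph fixing a tripod pointwise is
the identity. -/
theorem stmt_14 (φ : MKGraph ≃g MKGraph) (x : ZMod 16)
    (hx : φ x = x) (hnb : ∀ y : ZMod 16, MKGraph.Adj x y → φ y = y) :
    ∀ z : ZMod 16, φ z = z := by
  have hall : ∀ t : ZMod 16, t = 0 ∨ t = 1 ∨ t = 2 ∨ t = 3 ∨ t = 4 ∨ t = 5 ∨ t = 6 ∨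
      t = 7 ∨ t = 8 ∨ t = 9 ∨ t = 10 ∨ t = 11 ∨ t = 12 ∨ t = 13 ∨ t = 14 ∨ t = 15 := by
    decide
  rcases hall x with rfl|rfl|rfl|rfl|rfl|rfl|rfl|rfl|rfl|rfl|rfl|rfl|rfl|rfl|rfl|rfl
  · exact key0 φ hx hnb
  · exact transport φ ρMK 1 (by rw [ρMK_apply]; decide) hx hnb
  · exact transport φ σMK 2 (by rw [σMK_apply]; decide) hx hnb
  · exact transport φ (ρMK.trans σMK) 3 (by rw [RelIso.trans_apply, ρMK_apply, σMK_apply]; decide) hx hnb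
  · exact transport φ (σMK.trans σMK) 4 (by simp only [RelIso.trans_apply, σMK_apply]; decide) hx hnb
  · exact transport φ ((ρMK.trans σMK).trans σMK) 5
      (by simp only [RelIso.trans_apply, ρMK_apply, σMK_apply]; decide) hx hnb
  · exact transport φ ((σMK.trans σMK).trans σMK) 6
      (by simp only [RelIso.trans_apply, σMK_apply]; decide) hx hnb
  · exact transport φ (((ρMK.trans σMK).trans σMK).trans σMK) 7
      (by simp only [RelIso.trans_apply, ρMK_apply, σMK_apply]; decide) hx hnb
  · exact transport φ (((σMK.trans σMK).trans σMK).trans σMK) 8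
      (by simp only [RelIso.trans_apply, σMK_apply]; decide) hx hnb
  · exact transport φ ((((ρMK.trans σMK).trans σMK).trans σMK).trans σMK) 9
      (by simp only [RelIso.trans_apply, ρMK_apply, σMK_apply]; decide) hx hnb
  · exact transport φ ((((σMK.trans σMK).trans σMK).trans σMK).trans σMK) 10
      (by simp only [RelIso.trans_apply, σMK_apply]; decide) hx hnb
  · exact transport φ (((((ρMK.trans σMK).trans σMK).trans σMK).trans σMK).trans σMK) 11
      (by simp only [RelIso.trans_apply, ρMK_apply, σMK_apply]; decide) hx hnb
  · exact transport φ (((((σMK.trans σMK).trans σMK).trans σMK).trans σMK).trans σMK) 12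
      (by simp only [RelIso.trans_apply, σMK_apply]; decide) hx hnb
  · exact transport φ ((((((ρMK.trans σMK).trans σMK).trans σMK).trans σMK).trans σMK).trans σMK) 13
      (by simp only [RelIso.trans_apply, ρMK_apply, σMK_apply]; decide) hx hnb
  · exact transport φ ((((((σMK.trans σMK).trans σMK).trans σMK).trans σMK).trans σMK).trans σMK) 14
      (by simp only [RelIso.trans_apply, σMK_apply]; decide) hx hnb
  · exact transport φ (((((((ρMK.trans σMK).trans σMK).trans σMK).trans σMK).trans σMK).trans σMK).trans σMK) 15
      (by simp only [RelIso.trans_apply, ρMK_apply, σMK_apply]; decide) hx hnb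
end

section
/- Let x0, x1, x2, x3 be vertices of M with x0 adjacent to x1, x1 adjacent to x2, x2 adjacent to x3, x0 ≠ x2 and x1 ≠ x3, and suppose that for some a, b ∈ {0, 1, 3} with a ≠ b the edges {x0, x1} and {x2, x3} both have label b while the edge {x1, x2} has label a. Then the number of pairs (y1, y2) with x0 adjacent to y1, y1 adjacent to y2, y2 adjacent to x3, x0 ≠ y2, y1 ≠ x3, and (y1, y2) ≠ (x1, x2), is equal to 2 if and only if a = 0. (That is, a root with consecutive labels b, a, b is of rank 2 precisely when its middle label is the label coming from a_0 = 0.) -/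
/-- An edge `{x, y}` of `MKGraph` has label `a ∈ {0, 1, 3}` if
`{x, y} = {v, v + (2a - 1)}` for some `v : ZMod 16` with `v.val` even. -/
def HasLabel (x y : ZMod 16) (a : ℕ) : Prop :=
  ∃ v : ZMod 16, Even v.val ∧ s(x, y) = s(v, v + (2 * (a : ZMod 16) - 1))

def Lbl (x y : ZMod 16) (a : ℕ) : Prop :=
  (Even x.val ∧ y = x + (2 * (a : ZMod 16) - 1)) ∨
  (Even y.val ∧ x = y + (2 * (a : ZMod 16) - 1))

instance (x y : ZMod 16) (a : ℕ) : Decidable (Lbl x y a) := by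
  unfold Lbl; exact inferInstance

lemma hasLabel_iff (x y : ZMod 16) (a : ℕ) : HasLabel x y a ↔ Lbl x y a := by
  unfold HasLabel Lbl
  constructor
  · rintro ⟨v, hv, hs⟩
    rw [Sym2.eq_iff] at hs
    rcases hs with ⟨rfl, rfl⟩ | ⟨rfl, rfl⟩
    · exact Or.inl ⟨hv, rfl⟩
    · exact Or.inr ⟨hv, rfl⟩
  · rintro (⟨hv, rfl⟩ | ⟨hv, rfl⟩)
    · exact ⟨x, hv, rfl⟩
    · exact ⟨y, hv, by rw [Sym2.eq_swap]⟩

def Adj' (x y : ZMod 16) : Prop := Lbl x y 0 ∨ Lbl x y 1 ∨ Lbl x y 3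

instance (x y : ZMod 16) : Decidable (Adj' x y) := by
  unfold Adj'; exact inferInstance

lemma adj_ne : ∀ x y : ZMod 16, Adj' x y → x ≠ y := by decide

lemma adj_iff_s15 (x y : ZMod 16) : MKGraph.Adj x y ↔ Adj' x y := by
  constructor
  · rintro ⟨hne, a, ha, v, hv, hs⟩
    simp only [Set.mem_insert_iff, Set.mem_singleton_iff] at ha
    have h : HasLabel x y a := ⟨v, hv, hs⟩
    rw [hasLabel_iff] at h
    rcases ha with rfl | rfl | rfl
    · exact Or.inl h
    · exact Or.inr (Or.inl h)
    · exact Or.inr (Or.inr h)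
  · intro h
    refine ⟨adj_ne x y h, ?_⟩
    rcases h with h | h | h
    · exact ⟨0, by simp, ((hasLabel_iff x y 0).2 h : HasLabel x y 0)⟩
    · exact ⟨1, by simp, ((hasLabel_iff x y 1).2 h : HasLabel x y 1)⟩
    · exact ⟨3, by simp, ((hasLabel_iff x y 3).2 h : HasLabel x y 3)⟩

lemma parOdd : ∀ x c : ZMod 16, ¬ Even c.val → (Even (x + c).val ↔ ¬ Even x.val) := by decide

lemma parEven : ∀ x c : ZMod 16, Even c.val → (Even (x + c).val ↔ Even x.val) := by decide

lemma step0 : ∀ x y : ZMod 16, Lbl x y 0 → (Even x.val ∧ y = x + 15) ∨ (¬ Even x.val ∧ y = x + 1) := by decide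

lemma step1 : ∀ x y : ZMod 16, Lbl x y 1 → (Even x.val ∧ y = x + 1) ∨ (¬ Even x.val ∧ y = x + 15) := by decide

lemma step3 : ∀ x y : ZMod 16, Lbl x y 3 → (Even x.val ∧ y = x + 5) ∨ (¬ Even x.val ∧ y = x + 11) := by decide

set_option maxRecDepth 10000 in
lemma cardE01 : ∀ x0 : ZMod 16, Even x0.val →
    (Finset.univ.filter fun p : ZMod 16 × ZMod 16 =>
      Adj' x0 p.1 ∧ Adj' p.1 p.2 ∧ Adj' p.2 (x0 + 3) ∧ x0 ≠ p.2 ∧ p.1 ≠ x0 + 3 ∧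
      p ≠ (x0 + 1, x0 + 2)).card = 2 := by decide

set_option maxRecDepth 10000 in
lemma cardO01 : ∀ x0 : ZMod 16, ¬ Even x0.val →
    (Finset.univ.filter fun p : ZMod 16 × ZMod 16 =>
      Adj' x0 p.1 ∧ Adj' p.1 p.2 ∧ Adj' p.2 (x0 + 13) ∧ x0 ≠ p.2 ∧ p.1 ≠ x0 + 13 ∧
      p ≠ (x0 + 15, x0 + 14)).card = 2 := by decide

set_option maxRecDepth 10000 in
lemma cardE03 : ∀ x0 : ZMod 16, Even x0.val →
    (Finset.univ.filter fun p : ZMod 16 × ZMod 16 =>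
      Adj' x0 p.1 ∧ Adj' p.1 p.2 ∧ Adj' p.2 (x0 + 11) ∧ x0 ≠ p.2 ∧ p.1 ≠ x0 + 11 ∧
      p ≠ (x0 + 5, x0 + 6)).card = 2 := by decide

set_option maxRecDepth 10000 in
lemma cardO03 : ∀ x0 : ZMod 16, ¬ Even x0.val →
    (Finset.univ.filter fun p : ZMod 16 × ZMod 16 =>
      Adj' x0 p.1 ∧ Adj' p.1 p.2 ∧ Adj' p.2 (x0 + 5) ∧ x0 ≠ p.2 ∧ p.1 ≠ x0 + 5 ∧
      p ≠ (x0 + 11, x0 + 10)).card = 2 := by decide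

set_option maxRecDepth 10000 in
lemma cardE10 : ∀ x0 : ZMod 16, Even x0.val →
    (Finset.univ.filter fun p : ZMod 16 × ZMod 16 =>
      Adj' x0 p.1 ∧ Adj' p.1 p.2 ∧ Adj' p.2 (x0 + 13) ∧ x0 ≠ p.2 ∧ p.1 ≠ x0 + 13 ∧
      p ≠ (x0 + 15, x0 + 14)).card ≠ 2 := by decide

set_option maxRecDepth 10000 in
lemma cardO10 : ∀ x0 : ZMod 16, ¬ Even x0.val →
    (Finset.univ.filter fun p : ZMod 16 × ZMod 16 =>
      Adj' x0 p.1 ∧ Adj' p.1 p.2 ∧ Adj' p.2 (x0 + 3) ∧ x0 ≠ p.2 ∧ p.1 ≠ x0 + 3 ∧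
      p ≠ (x0 + 1, x0 + 2)).card ≠ 2 := by decide

set_option maxRecDepth 10000 in
lemma cardE13 : ∀ x0 : ZMod 16, Even x0.val →
    (Finset.univ.filter fun p : ZMod 16 × ZMod 16 =>
      Adj' x0 p.1 ∧ Adj' p.1 p.2 ∧ Adj' p.2 (x0 + 9) ∧ x0 ≠ p.2 ∧ p.1 ≠ x0 + 9 ∧
      p ≠ (x0 + 5, x0 + 4)).card ≠ 2 := by decide

set_option maxRecDepth 10000 in
lemma cardO13 : ∀ x0 : ZMod 16, ¬ Even x0.val →
    (Finset.univ.filter fun p : ZMod 16 × ZMod 16 =>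
      Adj' x0 p.1 ∧ Adj' p.1 p.2 ∧ Adj' p.2 (x0 + 7) ∧ x0 ≠ p.2 ∧ p.1 ≠ x0 + 7 ∧
      p ≠ (x0 + 11, x0 + 12)).card ≠ 2 := by decide

set_option maxRecDepth 10000 in
lemma cardE30 : ∀ x0 : ZMod 16, Even x0.val →
    (Finset.univ.filter fun p : ZMod 16 × ZMod 16 =>
      Adj' x0 p.1 ∧ Adj' p.1 p.2 ∧ Adj' p.2 (x0 + 9) ∧ x0 ≠ p.2 ∧ p.1 ≠ x0 + 9 ∧
      p ≠ (x0 + 15, x0 + 10)).card ≠ 2 := by decide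

set_option maxRecDepth 10000 in
lemma cardO30 : ∀ x0 : ZMod 16, ¬ Even x0.val →
    (Finset.univ.filter fun p : ZMod 16 × ZMod 16 =>
      Adj' x0 p.1 ∧ Adj' p.1 p.2 ∧ Adj' p.2 (x0 + 7) ∧ x0 ≠ p.2 ∧ p.1 ≠ x0 + 7 ∧
      p ≠ (x0 + 1, x0 + 6)).card ≠ 2 := by decide

set_option maxRecDepth 10000 in
lemma cardE31 : ∀ x0 : ZMod 16, Even x0.val →
    (Finset.univ.filter fun p : ZMod 16 × ZMod 16 =>
      Adj' x0 p.1 ∧ Adj' p.1 p.2 ∧ Adj' p.2 (x0 + 13) ∧ x0 ≠ p.2 ∧ p.1 ≠ x0 + 13 ∧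
      p ≠ (x0 + 1, x0 + 12)).card ≠ 2 := by decide

set_option maxRecDepth 10000 in
lemma cardO31 : ∀ x0 : ZMod 16, ¬ Even x0.val →
    (Finset.univ.filter fun p : ZMod 16 × ZMod 16 =>
      Adj' x0 p.1 ∧ Adj' p.1 p.2 ∧ Adj' p.2 (x0 + 3) ∧ x0 ≠ p.2 ∧ p.1 ≠ x0 + 3 ∧
      p ≠ (x0 + 15, x0 + 4)).card ≠ 2 := by decide

/-- A root with consecutive labels `b, a, b` is of rank 2 precisely when its
middle label is the one coming from `a₀ = 0`. -/
theorem stmt_15 (x0 x1 x2 x3 : ZMod 16) (a b : ℕ)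
    (haS : a ∈ ({0, 1, 3} : Set ℕ)) (hbS : b ∈ ({0, 1, 3} : Set ℕ)) (hab : a ≠ b)
    (h01 : MKGraph.Adj x0 x1) (h12 : MKGraph.Adj x1 x2) (h23 : MKGraph.Adj x2 x3)
    (h02 : x0 ≠ x2) (h13 : x1 ≠ x3)
    (hl01 : HasLabel x0 x1 b) (hl23 : HasLabel x2 x3 b) (hl12 : HasLabel x1 x2 a) :
    ({p : ZMod 16 × ZMod 16 |
        MKGraph.Adj x0 p.1 ∧ MKGraph.Adj p.1 p.2 ∧ MKGraph.Adj p.2 x3 ∧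
        x0 ≠ p.2 ∧ p.1 ≠ x3 ∧ p ≠ (x1, x2)}.ncard = 2) ↔ a = 0 := by
  have hset : {p : ZMod 16 × ZMod 16 |
        MKGraph.Adj x0 p.1 ∧ MKGraph.Adj p.1 p.2 ∧ MKGraph.Adj p.2 x3 ∧
        x0 ≠ p.2 ∧ p.1 ≠ x3 ∧ p ≠ (x1, x2)} =
      ↑(Finset.univ.filter fun p : ZMod 16 × ZMod 16 =>
        Adj' x0 p.1 ∧ Adj' p.1 p.2 ∧ Adj' p.2 x3 ∧ x0 ≠ p.2 ∧ p.1 ≠ x3 ∧ p ≠ (x1, x2)) := by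
    ext p
    simp only [Set.mem_setOf_eq, Finset.coe_filter, Finset.mem_univ, true_and, adj_iff_s15]
  rw [hset, Set.ncard_coe_finset]
  simp only [Set.mem_insert_iff, Set.mem_singleton_iff] at haS hbS
  rw [hasLabel_iff] at hl01 hl23 hl12
  clear h01 h12 h23 hset
  rcases haS with rfl | rfl | rfl <;> rcases hbS with rfl | rfl | rfl
  · exact absurd rfl hab
  · rcases step1 x0 x1 hl01 with ⟨he0, e1⟩ | ⟨he0, e1⟩
    · subst e1
      rcases step0 _ x2 hl12 with ⟨hp, e2⟩ | ⟨hp, e2⟩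
      · exact absurd he0 ((parOdd x0 1 (by decide)).mp hp)
      · have e2' : x2 = x0 + 2 := by
          rw [e2, add_assoc, show ((1 : ZMod 16) + 1 : ZMod 16) = 2 from by decide]
        subst e2'
        rcases step1 _ x3 hl23 with ⟨hp2, e3⟩ | ⟨hp2, e3⟩
        · have e3' : x3 = x0 + 3 := by
            rw [e3, add_assoc, show ((2 : ZMod 16) + 1 : ZMod 16) = 3 from by decide]
          subst e3'
          exact iff_of_true (cardE01 x0 he0) rfl
        · exact absurd ((parEven x0 2 (by decide)).mpr he0) hp2
    · subst e1
      rcases step0 _ x2 hl12 with ⟨hp, e2⟩ | ⟨hp, e2⟩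
      · have e2' : x2 = x0 + 14 := by
          rw [e2, add_assoc, show ((15 : ZMod 16) + 15 : ZMod 16) = 14 from by decide]
        subst e2'
        rcases step1 _ x3 hl23 with ⟨hp2, e3⟩ | ⟨hp2, e3⟩
        · exact absurd ((parEven x0 14 (by decide)).mp hp2) he0
        · have e3' : x3 = x0 + 13 := by
            rw [e3, add_assoc, show ((14 : ZMod 16) + 15 : ZMod 16) = 13 from by decide]
          subst e3'
          exact iff_of_true (cardO01 x0 he0) rfl
      · exact absurd ((parOdd x0 15 (by decide)).mpr he0) hp
  · rcases step3 x0 x1 hl01 with ⟨he0, e1⟩ | ⟨he0, e1⟩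
    · subst e1
      rcases step0 _ x2 hl12 with ⟨hp, e2⟩ | ⟨hp, e2⟩
      · exact absurd he0 ((parOdd x0 5 (by decide)).mp hp)
      · have e2' : x2 = x0 + 6 := by
          rw [e2, add_assoc, show ((5 : ZMod 16) + 1 : ZMod 16) = 6 from by decide]
        subst e2'
        rcases step3 _ x3 hl23 with ⟨hp2, e3⟩ | ⟨hp2, e3⟩
        · have e3' : x3 = x0 + 11 := by
            rw [e3, add_assoc, show ((6 : ZMod 16) + 5 : ZMod 16) = 11 from by decide]
          subst e3'
          exact iff_of_true (cardE03 x0 he0) rfl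
        · exact absurd ((parEven x0 6 (by decide)).mpr he0) hp2
    · subst e1
      rcases step0 _ x2 hl12 with ⟨hp, e2⟩ | ⟨hp, e2⟩
      · have e2' : x2 = x0 + 10 := by
          rw [e2, add_assoc, show ((11 : ZMod 16) + 15 : ZMod 16) = 10 from by decide]
        subst e2'
        rcases step3 _ x3 hl23 with ⟨hp2, e3⟩ | ⟨hp2, e3⟩
        · exact absurd ((parEven x0 10 (by decide)).mp hp2) he0
        · have e3' : x3 = x0 + 5 := by
            rw [e3, add_assoc, show ((10 : ZMod 16) + 11 : ZMod 16) = 5 from by decide]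
          subst e3'
          exact iff_of_true (cardO03 x0 he0) rfl
      · exact absurd ((parOdd x0 11 (by decide)).mpr he0) hp
  · rcases step0 x0 x1 hl01 with ⟨he0, e1⟩ | ⟨he0, e1⟩
    · subst e1
      rcases step1 _ x2 hl12 with ⟨hp, e2⟩ | ⟨hp, e2⟩
      · exact absurd he0 ((parOdd x0 15 (by decide)).mp hp)
      · have e2' : x2 = x0 + 14 := by
          rw [e2, add_assoc, show ((15 : ZMod 16) + 15 : ZMod 16) = 14 from by decide]
        subst e2'
        rcases step0 _ x3 hl23 with ⟨hp2, e3⟩ | ⟨hp2, e3⟩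
        · have e3' : x3 = x0 + 13 := by
            rw [e3, add_assoc, show ((14 : ZMod 16) + 15 : ZMod 16) = 13 from by decide]
          subst e3'
          exact iff_of_false (cardE10 x0 he0) (by decide)
        · exact absurd ((parEven x0 14 (by decide)).mpr he0) hp2
    · subst e1
      rcases step1 _ x2 hl12 with ⟨hp, e2⟩ | ⟨hp, e2⟩
      · have e2' : x2 = x0 + 2 := by
          rw [e2, add_assoc, show ((1 : ZMod 16) + 1 : ZMod 16) = 2 from by decide]
        subst e2'
        rcases step0 _ x3 hl23 with ⟨hp2, e3⟩ | ⟨hp2, e3⟩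
        · exact absurd ((parEven x0 2 (by decide)).mp hp2) he0
        · have e3' : x3 = x0 + 3 := by
            rw [e3, add_assoc, show ((2 : ZMod 16) + 1 : ZMod 16) = 3 from by decide]
          subst e3'
          exact iff_of_false (cardO10 x0 he0) (by decide)
      · exact absurd ((parOdd x0 1 (by decide)).mpr he0) hp
  · exact absurd rfl hab
  · rcases step3 x0 x1 hl01 with ⟨he0, e1⟩ | ⟨he0, e1⟩
    · subst e1
      rcases step1 _ x2 hl12 with ⟨hp, e2⟩ | ⟨hp, e2⟩
      · exact absurd he0 ((parOdd x0 5 (by decide)).mp hp)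
      · have e2' : x2 = x0 + 4 := by
          rw [e2, add_assoc, show ((5 : ZMod 16) + 15 : ZMod 16) = 4 from by decide]
        subst e2'
        rcases step3 _ x3 hl23 with ⟨hp2, e3⟩ | ⟨hp2, e3⟩
        · have e3' : x3 = x0 + 9 := by
            rw [e3, add_assoc, show ((4 : ZMod 16) + 5 : ZMod 16) = 9 from by decide]
          subst e3'
          exact iff_of_false (cardE13 x0 he0) (by decide)
        · exact absurd ((parEven x0 4 (by decide)).mpr he0) hp2
    · subst e1
      rcases step1 _ x2 hl12 with ⟨hp, e2⟩ | ⟨hp, e2⟩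
      · have e2' : x2 = x0 + 12 := by
          rw [e2, add_assoc, show ((11 : ZMod 16) + 1 : ZMod 16) = 12 from by decide]
        subst e2'
        rcases step3 _ x3 hl23 with ⟨hp2, e3⟩ | ⟨hp2, e3⟩
        · exact absurd ((parEven x0 12 (by decide)).mp hp2) he0
        · have e3' : x3 = x0 + 7 := by
            rw [e3, add_assoc, show ((12 : ZMod 16) + 11 : ZMod 16) = 7 from by decide]
          subst e3'
          exact iff_of_false (cardO13 x0 he0) (by decide)
      · exact absurd ((parOdd x0 11 (by decide)).mpr he0) hp
  · rcases step0 x0 x1 hl01 with ⟨he0, e1⟩ | ⟨he0, e1⟩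
    · subst e1
      rcases step3 _ x2 hl12 with ⟨hp, e2⟩ | ⟨hp, e2⟩
      · exact absurd he0 ((parOdd x0 15 (by decide)).mp hp)
      · have e2' : x2 = x0 + 10 := by
          rw [e2, add_assoc, show ((15 : ZMod 16) + 11 : ZMod 16) = 10 from by decide]
        subst e2'
        rcases step0 _ x3 hl23 with ⟨hp2, e3⟩ | ⟨hp2, e3⟩
        · have e3' : x3 = x0 + 9 := by
            rw [e3, add_assoc, show ((10 : ZMod 16) + 15 : ZMod 16) = 9 from by decide]
          subst e3'
          exact iff_of_false (cardE30 x0 he0) (by decide)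
        · exact absurd ((parEven x0 10 (by decide)).mpr he0) hp2
    · subst e1
      rcases step3 _ x2 hl12 with ⟨hp, e2⟩ | ⟨hp, e2⟩
      · have e2' : x2 = x0 + 6 := by
          rw [e2, add_assoc, show ((1 : ZMod 16) + 5 : ZMod 16) = 6 from by decide]
        subst e2'
        rcases step0 _ x3 hl23 with ⟨hp2, e3⟩ | ⟨hp2, e3⟩
        · exact absurd ((parEven x0 6 (by decide)).mp hp2) he0
        · have e3' : x3 = x0 + 7 := by
            rw [e3, add_assoc, show ((6 : ZMod 16) + 1 : ZMod 16) = 7 from by decide]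
          subst e3'
          exact iff_of_false (cardO30 x0 he0) (by decide)
      · exact absurd ((parOdd x0 1 (by decide)).mpr he0) hp
  · rcases step1 x0 x1 hl01 with ⟨he0, e1⟩ | ⟨he0, e1⟩
    · subst e1
      rcases step3 _ x2 hl12 with ⟨hp, e2⟩ | ⟨hp, e2⟩
      · exact absurd he0 ((parOdd x0 1 (by decide)).mp hp)
      · have e2' : x2 = x0 + 12 := by
          rw [e2, add_assoc, show ((1 : ZMod 16) + 11 : ZMod 16) = 12 from by decide]
        subst e2'
        rcases step1 _ x3 hl23 with ⟨hp2, e3⟩ | ⟨hp2, e3⟩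
        · have e3' : x3 = x0 + 13 := by
            rw [e3, add_assoc, show ((12 : ZMod 16) + 1 : ZMod 16) = 13 from by decide]
          subst e3'
          exact iff_of_false (cardE31 x0 he0) (by decide)
        · exact absurd ((parEven x0 12 (by decide)).mpr he0) hp2
    · subst e1
      rcases step3 _ x2 hl12 with ⟨hp, e2⟩ | ⟨hp, e2⟩
      · have e2' : x2 = x0 + 4 := by
          rw [e2, add_assoc, show ((15 : ZMod 16) + 5 : ZMod 16) = 4 from by decide]
        subst e2'
        rcases step1 _ x3 hl23 with ⟨hp2, e3⟩ | ⟨hp2, e3⟩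
        · exact absurd ((parEven x0 4 (by decide)).mp hp2) he0
        · have e3' : x3 = x0 + 3 := by
            rw [e3, add_assoc, show ((4 : ZMod 16) + 15 : ZMod 16) = 3 from by decide]
          subst e3'
          exact iff_of_false (cardO31 x0 he0) (by decide)
      · exact absurd ((parOdd x0 15 (by decide)).mpr he0) hp
  · exact absurd rfl hab
end
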